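/- Let P be a finite non-abelian p-group of order p^n with |Z(P)| = p^r, whose distinct non-central conjugacy class sizes are p^{a_1}, …, p^{a_k}, and let u = gcd(a_1, …, a_k, n - r). If H is a finite group with Γ_P ≅ Γ_H, then |Z(H)| divides p^r (p^u - 1). -/

import Mathlib

open Subgroup

/-- An isomorphism of non-commuting graphs: a bijection between the non-central
elements preserving adjacency (`x` adjacent to `y` iff `x*y ≠ y*x`), equivalently
preserving commutativity. -/
def NCGraphIso (G H : Type*) [Group G] [Group H] :=
  { e : {x : G // x ∉ center G} ≃ {y : H // y ∉ center H} //
      ∀ a b, Commute a.1 b.1 ↔ Commute (e a).1 (e b).1 }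

private lemma aux_gcd (C : ℤ) : ∀ m n : ℕ, ∀ d : ℤ,
    d ∣ C ^ m - 1 → d ∣ C ^ n - 1 → d ∣ C ^ (Nat.gcd m n) - 1 := by
  intro m n
  induction m, n using Nat.gcd.induction with
  | H0 n => intro d _ hn; simpa using hn
  | H1 m n hm ih =>
    intro d hdm hdn
    rw [Nat.gcd_rec]
    refine ih d ?_ hdm
    have key : C ^ n - 1 = C ^ (n % m) * ((C ^ m) ^ (n / m) - 1) + (C ^ (n % m) - 1) := by
      have h1 : C ^ (n % m) * (C ^ m) ^ (n / m) = C ^ n := by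
        rw [← pow_mul, ← pow_add, Nat.mod_add_div]
      linear_combination -h1
    have h2 : d ∣ (C ^ m) ^ (n / m) - 1 :=
      hdm.trans (by simpa using sub_dvd_pow_sub_pow (C ^ m) 1 (n / m))
    have h3 : d ∣ (C ^ n - 1) - C ^ (n % m) * ((C ^ m) ^ (n / m) - 1) :=
      dvd_sub hdn (h2.mul_left _)
    rw [key] at h3
    simpa using h3

private lemma gcd3 (A B C : ℕ) :
    Nat.gcd (Nat.gcd A B) C = Nat.gcd (Nat.gcd A C) (Nat.gcd B C) := by
  apply Nat.dvd_antisymm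
  · exact Nat.dvd_gcd
      (Nat.dvd_gcd ((Nat.gcd_dvd_left _ _).trans (Nat.gcd_dvd_left A B)) (Nat.gcd_dvd_right _ _))
      (Nat.dvd_gcd ((Nat.gcd_dvd_left _ _).trans (Nat.gcd_dvd_right A B)) (Nat.gcd_dvd_right _ _))
  · exact Nat.dvd_gcd
      (Nat.dvd_gcd ((Nat.gcd_dvd_left _ _).trans (Nat.gcd_dvd_left A C))
        ((Nat.gcd_dvd_right _ _).trans (Nat.gcd_dvd_left B C)))
      ((Nat.gcd_dvd_left _ _).trans (Nat.gcd_dvd_right A C))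

private lemma card_split' {α : Type*} [Finite α] (q : α → Prop) :
    Nat.card α = Nat.card {x // q x} + Nat.card {x // ¬ q x} := by
  classical
  rw [← Nat.card_sum]
  exact Nat.card_congr (Equiv.sumCompl q).symm

private lemma card_split {α : Type*} [Finite α] (s q : α → Prop) :
    Nat.card {x // s x} = Nat.card {x // s x ∧ q x} + Nat.card {x // s x ∧ ¬ q x} := by
  rw [card_split' (fun y : {x // s x} => q y.1)]
  congr 1
  · exact Nat.card_congr (Equiv.subtypeSubtypeEquivSubtypeInter s q)
  · exact Nat.card_congr (Equiv.subtypeSubtypeEquivSubtypeInter s (fun x => ¬ q x))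

private lemma card_comm_eq {G : Type*} [Group G] [Finite G] (x : G) :
    Nat.card {w : G // Commute x w} =
      Nat.card (center G) + Nat.card {w : {g : G // g ∉ center G} // Commute x w.1} := by
  classical
  rw [card_split (fun w => Commute x w) (fun w => w ∈ center G)]
  congr 1
  · exact Nat.card_congr (Equiv.subtypeEquivRight fun w =>
      ⟨And.right, fun h => ⟨(Subgroup.mem_center_iff.mp h x : x * w = w * x), h⟩⟩)
  · exact Nat.card_congr ((Equiv.subtypeEquivRight (fun g => and_comm)).trans
      (Equiv.subtypeSubtypeEquivSubtypeInter (fun g : G => g ∉ center G) (Commute x)).symm)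

private lemma card_centralizer_eq {G : Type*} [Group G] (x : G) :
    Nat.card (centralizer {x} : Subgroup G) = Nat.card {w : G // Commute x w} :=
  Nat.card_congr (Equiv.subtypeEquivRight fun w => by
    simp [Subgroup.mem_centralizer_iff, commute_iff_eq])

private lemma card_stabilizer_eq {G : Type*} [Group G] (g : G) :
    Nat.card (MulAction.stabilizer (ConjAct G) g) = Nat.card {w : G // Commute g w} := by
  apply Nat.card_congr
  refine Equiv.subtypeEquiv ConjAct.ofConjAct.toEquiv (fun q => ?_)
  rw [MulAction.mem_stabilizer_iff, ConjAct.smul_def, mul_inv_eq_iff_eq_mul]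
  simp only [MulEquiv.toEquiv_eq_coe, EquivLike.coe_coe]
  exact ⟨fun h => ((commute_iff_eq _ _).mpr h).symm, fun h => (commute_iff_eq _ _).mp h.symm⟩

private lemma orbit_stab {G : Type*} [Group G] [Finite G] (g : G) :
    Nat.card (MulAction.orbit (ConjAct G) g) * Nat.card {w : G // Commute g w} =
      Nat.card G := by
  classical
  rw [← card_stabilizer_eq]
  letI : Fintype G := Fintype.ofFinite G
  letI : Fintype (ConjAct G) := Fintype.ofFinite _
  letI : Fintype (MulAction.orbit (ConjAct G) g) := Fintype.ofFinite _
  letI : Fintype (MulAction.stabilizer (ConjAct G) g) := Fintype.ofFinite _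
  simp only [Nat.card_eq_fintype_card]
  rw [MulAction.card_orbit_mul_card_stabilizer_eq_card_group]
  exact Fintype.card_congr ConjAct.ofConjAct.toEquiv

theorem stmt6 (p : ℕ) (hp : p.Prime) (P : Type*) [Group P] [Finite P]
    (hP : IsPGroup p P) (hPna : ¬ ∀ a b : P, a * b = b * a)
    (n r k : ℕ) (hn : Nat.card P = p ^ n) (hr : Nat.card (center P) = p ^ r)
    (a : Fin k → ℕ)
    (ha1 : ∀ g : P, g ∉ center P → ∃ i, Nat.card (MulAction.orbit (ConjAct P) g) = p ^ a i)
    (ha2 : ∀ i, ∃ g : P, g ∉ center P ∧ Nat.card (MulAction.orbit (ConjAct P) g) = p ^ a i)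
    (u : ℕ) (hu : u = Nat.gcd (Finset.univ.gcd a) (n - r))
    (H : Type*) [Group H] [Finite H] (hH : ¬ ∀ a b : H, a * b = b * a)
    (φ : NCGraphIso P H) :
    Nat.card (center H) ∣ p ^ r * (p ^ u - 1) := by
  classical
  obtain ⟨e, he⟩ := φ
  set z := Nat.card (center H) with hz
  have hp1 : 1 < p := hp.one_lt
  -- cardinality of noncentral sets agree
  have hD : Nat.card {x : P // x ∉ center P} = Nat.card {y : H // y ∉ center H} :=
    Nat.card_congr e
  set D := Nat.card {y : H // y ∉ center H} with hDdef
  have hsplitP : Nat.card P = Nat.card (center P) + Nat.card {x : P // x ∉ center P} := by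
    simpa using card_split' (fun x : P => x ∈ center P)
  have hsplitH : Nat.card H = z + D := by
    simpa using card_split' (fun y : H => y ∈ center H)
  -- z divides |H|
  have hzH : z ∣ Nat.card H := Subgroup.card_subgroup_dvd_card _
  have hzD : z ∣ D := (Nat.dvd_add_right dvd_rfl).mp (hsplitH ▸ hzH)
  have hrn : r ≤ n := by
    have : p ^ r ∣ p ^ n := by
      rw [← hr, ← hn]; exact Subgroup.card_subgroup_dvd_card _
    exact (Nat.pow_dvd_pow_iff_le_right hp1).mp this
  have hDval : p ^ r + D = p ^ n := by
    rw [← hD, ← hr, ← hsplitP, hn]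
  -- base fact : z ∣ p^r * (p^(n-r) - 1)  (in ℤ)
  have fact1 : (z : ℤ) ∣ (p : ℤ) ^ r * ((p : ℤ) ^ (n - r) - 1) := by
    have h1 : (D : ℤ) = (p : ℤ) ^ r * ((p : ℤ) ^ (n - r) - 1) := by
      have h2 : ((p : ℤ)) ^ r + (D : ℤ) = (p : ℤ) ^ n := by exact_mod_cast hDval
      have h3 : (p : ℤ) ^ r * (p : ℤ) ^ (n - r) = (p : ℤ) ^ n := by
        rw [← pow_add]; congr 1; omega
      linear_combination h2 - h3
    rw [← h1]
    exact_mod_cast hzD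
  -- per-index facts
  have facti : ∀ i : Fin k, (z : ℤ) ∣ (p : ℤ) ^ r * ((p : ℤ) ^ (Nat.gcd (a i) (n - r)) - 1) := by
    intro i
    obtain ⟨g, hg, horb⟩ := ha2 i
    have hOS := orbit_stab g
    rw [horb, hn] at hOS
    set cP := Nat.card {w : P // Commute g w} with hcP
    have hcPsplit : cP = p ^ r + Nat.card {w : {x : P // x ∉ center P} // Commute g w.1} := by
      rw [hcP, card_comm_eq, hr]
    set dP := Nat.card {w : {x : P // x ∉ center P} // Commute g w.1} with hdP
    -- center divides centralizer in P, giving exponent bound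
    have hprdvd : p ^ r ∣ cP := by
      rw [hcP, ← card_centralizer_eq, ← hr]
      exact Subgroup.card_dvd_of_le (Subgroup.center_le_centralizer _)
    have hexp : a i + r ≤ n := by
      have : p ^ (a i) * p ^ r ∣ p ^ n := by
        rw [← hOS]; exact mul_dvd_mul_left _ hprdvd
      rw [← pow_add] at this
      exact (Nat.pow_dvd_pow_iff_le_right hp1).mp this
    have hcPval : cP = p ^ (n - a i) := by
      have h1 : p ^ (a i) * cP = p ^ (a i) * p ^ (n - a i) := by
        rw [hOS, ← pow_add]; congr 1; omega
      exact Nat.eq_of_mul_eq_mul_left (Nat.pow_pos (Nat.lt_of_lt_of_le Nat.zero_lt_one hp1.le)) h1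
    -- transfer to H
    set y : H := (e ⟨g, hg⟩).1 with hy
    have hdH : Nat.card {w : {x : H // x ∉ center H} // Commute y w.1} = dP := by
      rw [hdP]
      exact (Nat.card_congr (Equiv.subtypeEquiv e (fun w => he ⟨g, hg⟩ w))).symm
    have hcH : Nat.card {w : H // Commute y w} = z + dP := by
      rw [card_comm_eq, hdH]
    have hzcH : z ∣ Nat.card {w : H // Commute y w} := by
      rw [← card_centralizer_eq]
      exact Subgroup.card_dvd_of_le (Subgroup.center_le_centralizer _)
    have hzdP : z ∣ dP := by
      rw [hcH] at hzcH
      exact (Nat.dvd_add_right dvd_rfl).mp hzcH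
    -- dP = p^r * (p^(n-r-a i) - 1) in ℤ
    have hdPval : (dP : ℤ) = (p : ℤ) ^ r * ((p : ℤ) ^ (n - r - a i) - 1) := by
      have h2 : ((p : ℤ)) ^ r + (dP : ℤ) = (p : ℤ) ^ (n - a i) := by
        have := hcPsplit; rw [hcPval] at this; exact_mod_cast this.symm
      have h3 : (p : ℤ) ^ r * (p : ℤ) ^ (n - r - a i) = (p : ℤ) ^ (n - a i) := by
        rw [← pow_add]; congr 1; omega
      linear_combination h2 - h3
    have factA : (z : ℤ) ∣ (p : ℤ) ^ r * ((p : ℤ) ^ (n - r - a i) - 1) := by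
      rw [← hdPval]; exact_mod_cast hzdP
    -- combine with fact1
    have comb : (z : ℤ) ∣ (p : ℤ) ^ r * ((p : ℤ) ^ (Nat.gcd (n - r - a i) (n - r)) - 1) := by
      have h1 : (z : ℤ) ∣ ↑(Int.gcd ((p : ℤ) ^ r * ((p : ℤ) ^ (n - r - a i) - 1))
          ((p : ℤ) ^ r * ((p : ℤ) ^ (n - r) - 1))) := Int.dvd_coe_gcd factA fact1
      rw [Int.gcd_mul_left] at h1
      have h2 : (↑(Int.gcd ((p : ℤ) ^ (n - r - a i) - 1) ((p : ℤ) ^ (n - r) - 1)) : ℤ) ∣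
          (p : ℤ) ^ (Nat.gcd (n - r - a i) (n - r)) - 1 :=
        aux_gcd (p : ℤ) _ _ _ (Int.gcd_dvd_left _ _) (Int.gcd_dvd_right _ _)
      refine dvd_trans ?_ (mul_dvd_mul_left ((p : ℤ) ^ r) h2)
      have h3 : (((p : ℤ) ^ r).natAbs : ℤ) = (p : ℤ) ^ r := Int.natAbs_of_nonneg (by positivity)
      calc (z : ℤ) ∣ _ := h1
        _ = (p : ℤ) ^ r * ↑(Int.gcd ((p : ℤ) ^ (n - r - a i) - 1) ((p : ℤ) ^ (n - r) - 1)) := by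
            push_cast [h3]; ring
    have hgcdeq : Nat.gcd (n - r - a i) (n - r) = Nat.gcd (a i) (n - r) := by
      have hile : a i ≤ n - r := by omega
      rcases Nat.eq_or_lt_of_le hile with h | h
      · rw [h]; simp [Nat.sub_self]
      · have e1 : Nat.gcd (n - r - a i) ((n - r) - (n - r - a i)) =
            Nat.gcd (n - r - a i) (n - r) := Nat.gcd_sub_self_right (by omega)
        have e2 : (n - r) - (n - r - a i) = a i := by omega
        rw [e2] at e1
        rw [← e1, Nat.gcd_sub_self_left hile, Nat.gcd_comm]
    rwa [hgcdeq] at comb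
  -- combination over all indices by induction on finsets
  have comb2 : ∀ x y : ℕ, (z : ℤ) ∣ (p : ℤ) ^ r * ((p : ℤ) ^ x - 1) →
      (z : ℤ) ∣ (p : ℤ) ^ r * ((p : ℤ) ^ y - 1) →
      (z : ℤ) ∣ (p : ℤ) ^ r * ((p : ℤ) ^ (Nat.gcd x y) - 1) := by
    intro x y hx hy
    have h1 : (z : ℤ) ∣ ↑(Int.gcd ((p : ℤ) ^ r * ((p : ℤ) ^ x - 1))
        ((p : ℤ) ^ r * ((p : ℤ) ^ y - 1))) := Int.dvd_coe_gcd hx hy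
    rw [Int.gcd_mul_left] at h1
    have h2 : (↑(Int.gcd ((p : ℤ) ^ x - 1) ((p : ℤ) ^ y - 1)) : ℤ) ∣
        (p : ℤ) ^ (Nat.gcd x y) - 1 :=
      aux_gcd (p : ℤ) _ _ _ (Int.gcd_dvd_left _ _) (Int.gcd_dvd_right _ _)
    refine dvd_trans ?_ (mul_dvd_mul_left ((p : ℤ) ^ r) h2)
    have h3 : (((p : ℤ) ^ r).natAbs : ℤ) = (p : ℤ) ^ r := Int.natAbs_of_nonneg (by positivity)
    calc (z : ℤ) ∣ _ := h1
      _ = (p : ℤ) ^ r * ↑(Int.gcd ((p : ℤ) ^ x - 1) ((p : ℤ) ^ y - 1)) := by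
          push_cast [h3]; ring
  have main : ∀ s : Finset (Fin k),
      (z : ℤ) ∣ (p : ℤ) ^ r * ((p : ℤ) ^ (Nat.gcd (s.gcd a) (n - r)) - 1) := by
    intro s
    induction s using Finset.induction with
    | empty => simpa [Finset.gcd_empty, Nat.gcd_zero_left] using fact1
    | @insert i s hi ih =>
      rw [Finset.gcd_insert]
      have hgg : Nat.gcd (GCDMonoid.gcd (a i) (s.gcd a)) (n - r) =
          Nat.gcd (Nat.gcd (a i) (n - r)) (Nat.gcd (s.gcd a) (n - r)) := by
        have h0 : GCDMonoid.gcd (a i) (s.gcd a) = Nat.gcd (a i) (s.gcd a) := rfl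
        rw [h0]
        exact gcd3 (a i) (s.gcd a) (n - r)
      rw [hgg]
      exact comb2 _ _ (facti i) ih
  have final := main Finset.univ
  rw [← hu] at final
  have hcast : ((p ^ r * (p ^ u - 1) : ℕ) : ℤ) = (p : ℤ) ^ r * ((p : ℤ) ^ u - 1) := by
    have : 1 ≤ p ^ u := Nat.one_le_pow _ _ (by omega)
    push_cast [Nat.cast_sub this]
    ring
  rw [← Int.natCast_dvd_natCast, hcast]
  exact final
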